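/- Let x : Fin h × Fin w × T → {0,1} satisfy, for every color ℓ, the vertical balance equalities ∑_{k, s(k)=ℓ} x(i,j,k) = ∑_{k, n(k)=ℓ} x(i+1,j,k) for all vertically consecutive cells and the horizontal balance equalities ∑_{k, e(k)=ℓ} x(i,j,k) = ∑_{k, w(k)=ℓ} x(i,j+1,k) for all horizontally consecutive cells, together with ∑_{k∈T} x(i,j,k) = 1 for every cell in the first row and in the first column. Then ∑_{k∈T} x(i,j,k) = 1 for every cell (i,j) of the grid; that is, the one-tile-per-cell constraints propagate from the boundary through the color-balance adjacency constraints. -/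
import Mathlib


/-- the one-tile-per-cell constraints propagate from the first row and
first column through the color-balance adjacency constraints to every cell. -/
theorem stmt_17 {C T : Type} [Fintype T] [DecidableEq C]
    {h w : ℕ} (tn tw ts te : T → C)
    (x : Fin h → Fin w → T → ℕ)
    (hx : ∀ i j k, x i j k = 0 ∨ x i j k = 1)
    (hvert : ∀ (i : Fin h) (j : Fin w) (hi : i.val + 1 < h) (ℓ : C),
      (∑ k : T, if ts k = ℓ then x i j k else 0) =
        ∑ k : T, if tn k = ℓ then x ⟨i.val + 1, hi⟩ j k else 0)
    (hhor : ∀ (i : Fin h) (j : Fin w) (hj : j.val + 1 < w) (ℓ : C),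
      (∑ k : T, if te k = ℓ then x i j k else 0) =
        ∑ k : T, if tw k = ℓ then x i ⟨j.val + 1, hj⟩ k else 0)
    (hrow : ∀ (i : Fin h) (j : Fin w), i.val = 0 → (∑ k : T, x i j k) = 1)
    (hcol : ∀ (i : Fin h) (j : Fin w), j.val = 0 → (∑ k : T, x i j k) = 1) :
    ∀ (i : Fin h) (j : Fin w), (∑ k : T, x i j k) = 1 := by
  -- Summing the vertical balance over all relevant colors shows totals are
  -- preserved between consecutive rows.
  have key : ∀ (i : Fin h) (j : Fin w) (hi : i.val + 1 < h),
      (∑ k : T, x i j k) = ∑ k : T, x ⟨i.val + 1, hi⟩ j k := by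
    intro i j hi
    set S : Finset C := (Finset.univ.image ts) ∪ (Finset.univ.image tn) with hS
    have h1 : (∑ ℓ ∈ S, ∑ k : T, if ts k = ℓ then x i j k else 0)
        = ∑ k : T, x i j k := by
      rw [Finset.sum_comm]
      refine Finset.sum_congr rfl fun k _ => ?_
      rw [Finset.sum_ite_eq S (ts k)]
      simp [hS]
    have h2 : (∑ ℓ ∈ S, ∑ k : T, if tn k = ℓ then x ⟨i.val + 1, hi⟩ j k else 0)
        = ∑ k : T, x ⟨i.val + 1, hi⟩ j k := by
      rw [Finset.sum_comm]
      refine Finset.sum_congr rfl fun k _ => ?_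
      rw [Finset.sum_ite_eq S (tn k)]
      simp [hS]
    rw [← h1, ← h2]
    exact Finset.sum_congr rfl fun ℓ _ => hvert i j hi ℓ
  intro i j
  obtain ⟨iv, hiv⟩ := i
  induction iv with
  | zero => exact hrow ⟨0, hiv⟩ j rfl
  | succ n ih =>
    have hn : n < h := Nat.lt_of_succ_lt hiv
    rw [← key ⟨n, hn⟩ j hiv]
    exact ih hn
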